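/- arXiv:1610.04199 — 4 statements merged into one kernel-verified Lean document; each statement's English description precedes it below -/
import Mathlib

section
/- Let C be a random subset of {1,...,n} and let S_1, S_2, ... be independent random subsets of {1,...,n}, each distributed as C. Let α ∈ [0,1]. If there exists a set 𝒜 ∈ Π(α,C) with P(C ⊆ 𝒜) > 1−α, then almost surely there exists M such that for all m > M, every element of Ŝ(α, S_{1:m}) belongs to Π(α,C). -/
open MeasureTheory

/-- The relative frequency with which the sets `s 0, …, s (m-1)` are covered by `A`. -/
noncomputable def rel (n : ℕ) (A : Finset (Fin n)) (m : ℕ) (s : ℕ → Finset (Fin n)) : ℝ :=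
  (∑ i ∈ Finset.range m, if s i ⊆ A then (1 : ℝ) else 0) / m

/-- `Π(α,C)`: the set of smallest simultaneous `α`-level credible regions, i.e. the sets
`A ⊆ {1,…,n}` with `P(C ⊆ A) ≥ 1 - α` of minimal cardinality among all such sets. -/
def credPi {Ω : Type} [MeasurableSpace Ω] (P : Measure Ω) {n : ℕ}
    (C : Ω → Finset (Fin n)) (α : ℝ) : Set (Finset (Fin n)) :=
  {A | 1 - α ≤ (P {ω | C ω ⊆ A}).toReal ∧
    ∀ B : Finset (Fin n), 1 - α ≤ (P {ω | C ω ⊆ B}).toReal → A.card ≤ B.card}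

/-- `Ŝ(α, s_{1:m})`: the sample based problem, i.e. the sets `A ⊆ {1,…,n}` with
`rel(A, s_{1:m}) ≥ 1 - α` of minimal cardinality among all such sets. -/
def sampleSol (n : ℕ) (α : ℝ) (m : ℕ) (s : ℕ → Finset (Fin n)) : Set (Finset (Fin n)) :=
  {A | 1 - α ≤ rel n A m s ∧
    ∀ B : Finset (Fin n), 1 - α ≤ rel n B m s → A.card ≤ B.card}

section Aux

variable {Ω : Type} [MeasurableSpace Ω] {n : ℕ}


/-- If a random set has the same one-point distribution as a measurably-valued one,
then its level sets are null measurable. -/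
lemma aux_nullMeas (P : Measure Ω) [IsProbabilityMeasure P]
    (C : Ω → Finset (Fin n)) (hCmeas : ∀ A : Finset (Fin n), MeasurableSet {ω | C ω = A})
    (T : Ω → Finset (Fin n)) (hT : ∀ B, P {ω | T ω = B} = P {ω | C ω = B}) :
    ∀ B, NullMeasurableSet {ω | T ω = B} P := by
  classical
  set p : Finset (Fin n) → ENNReal := fun B => P {ω | C ω = B} with hp
  have hsum : ∑ B : Finset (Fin n), p B = 1 := by
    have hdisj : Pairwise (Function.onFun Disjoint fun B => {ω | C ω = B}) := by
      intro B B' hne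
      simp only [Function.onFun, Set.disjoint_left]
      rintro ω h1 h2
      exact hne (h1.symm.trans h2)
    have hU : (⋃ B : Finset (Fin n), {ω | C ω = B}) = Set.univ := by
      ext ω; simp
    have := measure_iUnion (μ := P) hdisj hCmeas
    rw [hU, measure_univ, tsum_fintype] at this
    exact this.symm
  set Z : Finset (Fin n) → Set Ω := fun B => {ω | T ω = B} with hZ
  set H : Finset (Fin n) → Set Ω := fun B => toMeasurable P (Z B) with hH
  have hZH : ∀ B, Z B ⊆ H B := fun B => subset_toMeasurable P (Z B)
  have hHmeas : ∀ B, MeasurableSet (H B) := fun B => measurableSet_toMeasurable P (Z B)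
  have hPH : ∀ B, P (H B) = p B := fun B => by
    rw [hH, measure_toMeasurable, hZ]; exact hT B
  -- pairwise intersections of the hulls are null
  have hkey : ∀ B B' : Finset (Fin n), B ≠ B' → P (H B ∩ H B') = 0 := by
    intro B B' hne
    set e : Finset (Finset (Fin n)) := (Finset.univ.erase B).erase B' with he
    have hcover : Set.univ ⊆ (H B ∪ H B') ∪ ⋃ B'' ∈ e, H B'' := by
      intro ω _
      have hmem : ω ∈ Z (T ω) := rfl
      by_cases h1 : T ω = B
      · exact Or.inl (Or.inl (hZH _ (h1 ▸ hmem)))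
      by_cases h2 : T ω = B'
      · exact Or.inl (Or.inr (hZH _ (h2 ▸ hmem)))
      · refine Or.inr (Set.mem_biUnion ?_ (hZH _ hmem))
        exact Finset.mem_erase.2 ⟨h2, Finset.mem_erase.2 ⟨h1, Finset.mem_univ _⟩⟩
    have hsum' : p B + (p B' + ∑ B'' ∈ e, p B'') = 1 := by
      rw [← hsum]
      have h1 : B' ∈ Finset.univ.erase B := by simp [hne.symm]
      rw [← Finset.add_sum_erase _ p (Finset.mem_univ B),
        ← Finset.add_sum_erase _ p h1]
    have hchain : 1 + P (H B ∩ H B') ≤ 1 := by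
      calc 1 + P (H B ∩ H B')
          = P (Set.univ) + P (H B ∩ H B') := by rw [measure_univ]
        _ ≤ P ((H B ∪ H B') ∪ ⋃ B'' ∈ e, H B'') + P (H B ∩ H B') :=
            add_le_add_left (measure_mono hcover) _
        _ ≤ (P (H B ∪ H B') + P (⋃ B'' ∈ e, H B'')) + P (H B ∩ H B') :=
            add_le_add_left (measure_union_le _ _) _
        _ = (P (H B ∪ H B') + P (H B ∩ H B')) + P (⋃ B'' ∈ e, H B'') := by ring
        _ = (P (H B) + P (H B')) + P (⋃ B'' ∈ e, H B'') := by
            rw [measure_union_add_inter _ (hHmeas B')]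
        _ ≤ (p B + p B') + ∑ B'' ∈ e, p B'' := by
            rw [hPH, hPH]
            refine add_le_add_right ?_ _
            refine le_trans (measure_biUnion_finset_le _ _) ?_
            exact Finset.sum_le_sum fun B'' _ => le_of_eq (hPH B'')
        _ = 1 := by rw [← hsum']; ring
    have : P (H B ∩ H B') ≤ 0 := by
      have := hchain
      rwa [← add_zero 1, add_assoc, zero_add,
        ENNReal.add_le_add_iff_left (by norm_num)] at this
    exact le_antisymm this zero_le
  -- H B \ Z B is null
  intro B
  have hnull : P (H B \ Z B) = 0 := by
    have hsub : H B \ Z B ⊆ ⋃ B' ∈ Finset.univ.erase B, (H B ∩ H B') := by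
      rintro ω ⟨hωH, hωZ⟩
      have hmem : ω ∈ Z (T ω) := rfl
      have hne : T ω ≠ B := fun h => hωZ (h ▸ hmem)
      exact Set.mem_biUnion (Finset.mem_erase.2 ⟨hne, Finset.mem_univ _⟩) ⟨hωH, hZH _ hmem⟩
    refine measure_mono_null hsub ?_
    refine le_antisymm (le_trans (measure_biUnion_finset_le _ _) ?_) zero_le
    refine le_of_eq (Finset.sum_eq_zero fun B' hB' => ?_)
    exact hkey B B' (by rintro rfl; simp at hB')
  show NullMeasurableSet (Z B) P
  rw [(Set.diff_diff_cancel_left (hZH B)).symm]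
  exact ((hHmeas B).nullMeasurableSet).diff (NullMeasurableSet.of_null hnull)

lemma aux_aemeas (P : Measure Ω) [IsProbabilityMeasure P]
    (C : Ω → Finset (Fin n)) (hCmeas : ∀ A : Finset (Fin n), MeasurableSet {ω | C ω = A})
    (T : Ω → Finset (Fin n)) (hT : ∀ B, P {ω | T ω = B} = P {ω | C ω = B}) :
    @AEMeasurable Ω (Finset (Fin n)) ⊤ _ T P := by
  letI : MeasurableSpace (Finset (Fin n)) := ⊤
  have hnm : NullMeasurable T P := by
    intro s _
    have : T ⁻¹' s = ⋃ B ∈ s, {ω | T ω = B} := by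
      ext ω; simp [Set.mem_preimage, eq_comm]
    rw [this]
    exact NullMeasurableSet.biUnion s.to_countable
      (fun B _ => aux_nullMeas P C hCmeas T hT B)
  exact hnm.aemeasurable
theorem aux_conv {Ω : Type} [MeasurableSpace Ω] (P : Measure Ω) [IsProbabilityMeasure P]
    (n : ℕ) (C : Ω → Finset (Fin n)) (S : ℕ → Ω → Finset (Fin n))
    (hCmeas : ∀ A : Finset (Fin n), MeasurableSet {ω | C ω = A})
    (hindep : ProbabilityTheory.iIndepFun
      (m := fun _ : ℕ => (⊤ : MeasurableSpace (Finset (Fin n)))) S P)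
    (hident : ∀ (i : ℕ) (A : Finset (Fin n)), P {ω | S i ω = A} = P {ω | C ω = A}) :
    ∀ᵐ ω ∂P, ∀ A : Finset (Fin n),
      Filter.Tendsto (fun m => rel n A m (fun i => S i ω)) Filter.atTop
        (nhds ((P {ω' | C ω' ⊆ A}).toReal)) := by
  classical
  letI : MeasurableSpace (Finset (Fin n)) := ⊤
  have hae : ∀ i, AEMeasurable (S i) P := fun i =>
    aux_aemeas P C hCmeas (S i) (hident i)
  have hCm : Measurable C := by
    intro s _
    have : C ⁻¹' s = ⋃ B ∈ s, {ω | C ω = B} := by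
      ext ω; simp [Set.mem_preimage, eq_comm]
    rw [this]
    exact MeasurableSet.biUnion s.to_countable (fun B _ => hCmeas B)
  have hmapeq : ∀ (T : Ω → Finset (Fin n)), AEMeasurable T P →
      (∀ B, P {ω | T ω = B} = P {ω | C ω = B}) → P.map T = P.map C := by
    intro T hTm hT
    refine MeasureTheory.Measure.ext_of_singleton (fun B => ?_)
    rw [Measure.map_apply_of_aemeasurable hTm (MeasurableSpace.measurableSet_top),
      Measure.map_apply hCm (MeasurableSpace.measurableSet_top)]
    have h1 : T ⁻¹' {B} = {ω | T ω = B} := by ext ω; simp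
    have h2 : C ⁻¹' {B} = {ω | C ω = B} := by ext ω; simp
    rw [h1, h2, hT]
  have hSid : ∀ i, ProbabilityTheory.IdentDistrib (S i) (S 0) P P := fun i =>
    ⟨hae i, hae 0, by rw [hmapeq (S i) (hae i) (hident i),
      hmapeq (S 0) (hae 0) (hident 0)]⟩
  have hS0C : ProbabilityTheory.IdentDistrib (S 0) C P P :=
    ⟨hae 0, hCm.aemeasurable, hmapeq (S 0) (hae 0) (hident 0)⟩
  rw [MeasureTheory.ae_all_iff]
  intro A
  set f : Finset (Fin n) → ℝ := fun s => if s ⊆ A then 1 else 0 with hfdef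
  have hf : Measurable f := measurable_from_top
  set X : ℕ → Ω → ℝ := fun i ω => f (S i ω) with hXdef
  have hXindep : Pairwise (Function.onFun (ProbabilityTheory.IndepFun · · P) X) := by
    intro i j hij
    exact (hindep.comp (fun _ => f) (fun _ => hf)).indepFun hij
  have hXident : ∀ i, ProbabilityTheory.IdentDistrib (X i) (X 0) P P := fun i =>
    (hSid i).comp hf
  have msA : MeasurableSet {ω | C ω ⊆ A} :=
    hCm (MeasurableSpace.measurableSet_top (s := {s : Finset (Fin n) | s ⊆ A}))
  set Y : Ω → ℝ := fun ω => f (C ω) with hYdef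
  have hYind : Y = Set.indicator {ω | C ω ⊆ A} (fun _ => (1:ℝ)) := by
    ext ω; by_cases h : C ω ⊆ A <;> simp [hYdef, hfdef, Set.indicator, h]
  have hYint : Integrable Y P := by
    rw [hYind]; exact (integrable_const 1).indicator msA
  have hYval : ∫ ω, Y ω ∂P = (P {ω' | C ω' ⊆ A}).toReal := by
    rw [hYind, MeasureTheory.integral_indicator_const (1:ℝ) msA, smul_eq_mul, mul_one, measureReal_def]
  have hX0id : ProbabilityTheory.IdentDistrib (X 0) Y P P := hS0C.comp hf
  have hXint : Integrable (X 0) P := hX0id.integrable_iff.mpr hYint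
  have hmean : ∫ ω, X 0 ω ∂P = (P {ω' | C ω' ⊆ A}).toReal := by
    rw [hX0id.integral_eq, hYval]
  have hsl := ProbabilityTheory.strong_law_ae X hXint hXindep hXident
  rw [hmean] at hsl
  filter_upwards [hsl] with ω hω
  have : (fun m => rel n A m (fun i => S i ω))
      = (fun m : ℕ => (m : ℝ)⁻¹ • ∑ i ∈ Finset.range m, X i ω) := by
    funext m
    simp [rel, hXdef, hfdef, div_eq_inv_mul, smul_eq_mul]
  rw [this]
  exact hω

end Aux

/-- Let `C` be a random subset of `{1,…,n}` and `S 0, S 1, …` independent random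
subsets of `{1,…,n}`, each distributed as `C`, and `α ∈ [0,1]`. If there exists
`𝒜 ∈ Π(α,C)` with `P(C ⊆ 𝒜) > 1 - α`, then almost surely there exists `M` such that for all
`m > M` every element of `Ŝ(α, S_{1:m})` belongs to `Π(α,C)`. -/
theorem stmt0 {Ω : Type} [MeasurableSpace Ω] (P : Measure Ω) [IsProbabilityMeasure P]
    (n : ℕ) (C : Ω → Finset (Fin n)) (S : ℕ → Ω → Finset (Fin n))
    (hCmeas : ∀ A : Finset (Fin n), MeasurableSet {ω | C ω = A})
    (hindep : ProbabilityTheory.iIndepFun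
      (m := fun _ : ℕ => (⊤ : MeasurableSpace (Finset (Fin n)))) S P)
    (hident : ∀ (i : ℕ) (A : Finset (Fin n)), P {ω | S i ω = A} = P {ω | C ω = A})
    (α : ℝ) (hα : α ∈ Set.Icc (0 : ℝ) 1)
    (𝒜 : Finset (Fin n)) (h𝒜 : 𝒜 ∈ credPi P C α)
    (h𝒜strict : 1 - α < (P {ω | C ω ⊆ 𝒜}).toReal) :
    ∀ᵐ ω ∂P, ∃ M : ℕ, ∀ m > M, sampleSol n α m (fun i => S i ω) ⊆ credPi P C α := by
  have hconv := aux_conv P n C S hCmeas hindep hident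
  filter_upwards [hconv] with ω hω
  set q : Finset (Fin n) → ℝ := fun A => (P {ω' | C ω' ⊆ A}).toReal with hq
  have hEv : ∀ᶠ m in Filter.atTop,
      (1 - α < rel n 𝒜 m (fun i => S i ω)) ∧
      ∀ A : Finset (Fin n), q A < 1 - α → rel n A m (fun i => S i ω) < 1 - α := by
    refine Filter.Eventually.and ?_ ?_
    · exact (hω 𝒜).eventually_const_lt h𝒜strict
    · rw [Filter.eventually_all]
      intro A
      by_cases h : q A < 1 - α
      · exact ((hω A).eventually_lt_const h).mono (fun m hm _ => hm)
      · exact Filter.Eventually.of_forall (fun m hm => absurd hm h)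
  obtain ⟨M, hM⟩ := Filter.eventually_atTop.1 hEv
  refine ⟨M, fun m hm A hA => ?_⟩
  obtain ⟨hfeas, hmin⟩ := hA
  have hMm := hM m (le_of_lt hm)
  constructor
  · by_contra h
    exact absurd hfeas (not_le.2 (hMm.2 A (not_le.1 h)))
  · intro B hB
    exact le_trans (hmin 𝒜 hMm.1.le) (h𝒜.2 B hB)
end

section
/- Let C be a random subset of {1,...,n} and α ∈ [0,1]. Then the set {i ∈ {1,...,n} : P(i ∈ C) > α} is contained in every element of Π(α,C), i.e. in every smallest simultaneous α-level credible region. -/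
open MeasureTheory

/-- The set `{i : P(i ∈ C) > α}` is contained in every element of `Π(α,C)`,
i.e. in every smallest simultaneous `α`-level credible region. -/
theorem stmt6 {Ω : Type} [MeasurableSpace Ω] (P : Measure Ω) [IsProbabilityMeasure P]
    (n : ℕ) (C : Ω → Finset (Fin n))
    (hCmeas : ∀ A : Finset (Fin n), MeasurableSet {ω | C ω = A})
    (α : ℝ) (hα : α ∈ Set.Icc (0 : ℝ) 1) :
    ∀ A ∈ credPi P C α, ∀ i : Fin n, α < (P {ω | i ∈ C ω}).toReal → i ∈ A := by
  rintro A ⟨hA, _⟩ i hi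
  by_contra hiA
  have hF : MeasurableSet {ω | i ∈ C ω} := by
    have : {ω | i ∈ C ω} = ⋃ B ∈ {B : Finset (Fin n) | i ∈ B}, {ω | C ω = B} := by
      ext ω; simp
    rw [this]
    exact MeasurableSet.biUnion (Set.to_countable _) (fun B _ => hCmeas B)
  have hdisj : Disjoint {ω | C ω ⊆ A} {ω | i ∈ C ω} := by
    rw [Set.disjoint_left]
    intro ω h1 h2
    exact hiA (h1 h2)
  have hsum : P {ω | C ω ⊆ A} + P {ω | i ∈ C ω} ≤ 1 := by
    rw [← measure_union hdisj hF]
    exact (measure_mono (Set.subset_univ _)).trans_eq measure_univ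
  have h1 : (P {ω | C ω ⊆ A}).toReal + (P {ω | i ∈ C ω}).toReal ≤ 1 := by
    rw [← ENNReal.toReal_add (measure_ne_top _ _) (measure_ne_top _ _)]
    calc _ ≤ (1 : ENNReal).toReal := ENNReal.toReal_mono (by simp) hsum
    _ = 1 := by simp
  linarith
end

section
/- Let s_1, ..., s_m ⊆ {1,...,n} and α ∈ [0,1]. A pair of binary assignments (U_1,...,U_n) ∈ {0,1}^n and (F_1,...,F_m) ∈ {0,1}^m is ILP-feasible if (I) Σ_{j=1}^m F_j ≥ m·(1−α) and (II) for every i ∈ {1,...,n}, Σ_{j : i ∈ s_j} (1−F_j) ≥ #{j : i ∈ s_j}·(1−U_i). Then the minimum of Σ_{i=1}^n U_i over ILP-feasible assignments equals the minimum of #A over sets A ⊆ {1,...,n} with rel(A, s_{1:m}) ≥ 1−α, and if (U,F) attains the ILP minimum then A = {i : U_i = 1} satisfies rel(A, s_{1:m}) ≥ 1−α and A ∈ Ŝ(α, s_{1:m}). -/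
open MeasureTheory

/-- `(U, F)` is a feasible assignment of the ILP formulation of the sample based problem:
the `U i` and `F j` are binary, **(I)** `Σⱼ F j ≥ m·(1-α)`, and **(II)** for every time point
`i`, `Σ_{j : i ∈ s j} (1 - F j) ≥ #{j : i ∈ s j}·(1 - U i)`. -/
def ILPFeasible (n m : ℕ) (s : ℕ → Finset (Fin n)) (α : ℝ)
    (U : Fin n → ℕ) (F : ℕ → ℕ) : Prop :=
  (∀ i : Fin n, U i ≤ 1) ∧ (∀ j ∈ Finset.range m, F j ≤ 1) ∧
  ((m : ℝ) * (1 - α) ≤ ∑ j ∈ Finset.range m, (F j : ℝ)) ∧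
  ∀ i : Fin n,
    (((Finset.range m).filter (fun j => i ∈ s j)).card : ℝ) * (1 - (U i : ℝ)) ≤
      ∑ j ∈ (Finset.range m).filter (fun j => i ∈ s j), (1 - (F j : ℝ))

lemma set_to_ilp (n m : ℕ) (hm : 0 < m) (s : ℕ → Finset (Fin n)) (α : ℝ)
    (A : Finset (Fin n)) (hA : 1 - α ≤ rel n A m s) :
    ILPFeasible n m s α (fun i => if i ∈ A then 1 else 0) (fun j => if s j ⊆ A then 1 else 0) ∧
      (∑ i : Fin n, (if i ∈ A then 1 else 0)) = A.card := by
  have hmR : (0:ℝ) < m := by exact_mod_cast hm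
  constructor
  · refine ⟨fun i => by dsimp; split <;> simp, fun j _ => by dsimp; split <;> simp, ?_, ?_⟩
    · rw [rel, le_div_iff₀ hmR] at hA
      calc (m:ℝ) * (1 - α) = (1-α) * m := by ring
        _ ≤ ∑ j ∈ Finset.range m, if s j ⊆ A then (1:ℝ) else 0 := hA
        _ = _ := by
            refine Finset.sum_congr rfl fun j _ => ?_
            split <;> simp_all
    · intro i
      by_cases hi : i ∈ A
      · simp only [hi, if_true, Nat.cast_one, sub_self, mul_zero]
        refine Finset.sum_nonneg fun j _ => ?_
        split <;> norm_num
      · simp only [hi, if_false, Nat.cast_zero, sub_zero, mul_one]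
        have : ∀ j ∈ (Finset.range m).filter (fun j => i ∈ s j),
            (1 - (((if s j ⊆ A then 1 else 0) : ℕ) : ℝ)) = 1 := by
          intro j hj
          rw [Finset.mem_filter] at hj
          have : ¬ s j ⊆ A := fun h => hi (h hj.2)
          simp [this]
        rw [Finset.sum_congr rfl this]
        simp
  · rw [← Finset.card_filter]
    congr 1
    exact Finset.filter_univ_mem A

lemma ilp_to_set (n m : ℕ) (hm : 0 < m) (s : ℕ → Finset (Fin n)) (α : ℝ)
    (U : Fin n → ℕ) (F : ℕ → ℕ) (h : ILPFeasible n m s α U F) :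
    1 - α ≤ rel n (Finset.univ.filter (fun i => U i = 1)) m s ∧
      (Finset.univ.filter (fun i => U i = 1)).card ≤ ∑ i : Fin n, U i := by
  obtain ⟨hU, hF, hI, hII⟩ := h
  set A := Finset.univ.filter (fun i : Fin n => U i = 1) with hAdef
  have hmR : (0:ℝ) < m := by exact_mod_cast hm
  have key : ∀ j ∈ Finset.range m, F j = 1 → s j ⊆ A := by
    intro j hj hFj i his
    by_contra hiA
    have hUi : U i = 0 := by
      have : U i ≠ 1 := by simpa [hAdef] using hiA
      have := hU i; omega
    have h2 := hII i
    set T := (Finset.range m).filter (fun j => i ∈ s j) with hT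
    have hjT : j ∈ T := Finset.mem_filter.2 ⟨hj, his⟩
    rw [hUi] at h2
    simp only [Nat.cast_zero, sub_zero, mul_one] at h2
    have hsum : ∑ j' ∈ T, (1 - (F j' : ℝ)) ≤ (T.card : ℝ) - 1 := by
      rw [← Finset.add_sum_erase T _ hjT]
      have h1 : (1 - (F j : ℝ)) = 0 := by rw [hFj]; norm_num
      rw [h1, zero_add]
      calc ∑ j' ∈ T.erase j, (1 - (F j' : ℝ))
          ≤ ∑ j' ∈ T.erase j, (1:ℝ) := by
            refine Finset.sum_le_sum fun j' _ => ?_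
            have : (0:ℝ) ≤ (F j' : ℝ) := Nat.cast_nonneg _
            linarith
        _ = ((T.erase j).card : ℝ) := by simp
        _ = (T.card : ℝ) - 1 := by
            rw [Finset.card_erase_of_mem hjT]
            have : 1 ≤ T.card := Finset.card_pos.2 ⟨j, hjT⟩
            push_cast [Nat.cast_sub this]
            ring
    linarith
  constructor
  · rw [rel, le_div_iff₀ hmR]
    calc (1 - α) * m = (m:ℝ) * (1 - α) := by ring
      _ ≤ ∑ j ∈ Finset.range m, (F j : ℝ) := hI
      _ ≤ ∑ j ∈ Finset.range m, if s j ⊆ A then (1:ℝ) else 0 := by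
          refine Finset.sum_le_sum fun j hj => ?_
          by_cases hFj : F j = 1
          · rw [if_pos (key j hj hFj), hFj, Nat.cast_one]
          · have : F j = 0 := by have := hF j hj; omega
            rw [this, Nat.cast_zero]
            split <;> norm_num
  · calc A.card = ∑ i ∈ A, U i := by
          rw [Finset.sum_congr rfl (fun i hi => (Finset.mem_filter.1 hi).2), Finset.sum_const,
            smul_eq_mul, mul_one]
      _ ≤ ∑ i : Fin n, U i := Finset.sum_le_sum_of_subset (Finset.filter_subset _ _)

/-- The minimum of `Σᵢ U i` over ILP-feasible assignments equals the minimum of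
`#A` over sets `A` with `rel(A, s_{1:m}) ≥ 1 - α`, and if `(U, F)` attains the ILP minimum
then `A = {i : U i = 1}` satisfies `rel(A, s_{1:m}) ≥ 1 - α` and `A ∈ Ŝ(α, s_{1:m})`. -/
theorem stmt14 (n m : ℕ) (hm : 0 < m) (s : ℕ → Finset (Fin n))
    (α : ℝ) (hα : α ∈ Set.Icc (0 : ℝ) 1) :
    (sInf {k : ℕ | ∃ U F, ILPFeasible n m s α U F ∧ (∑ i : Fin n, U i) = k} =
      sInf {k : ℕ | ∃ A : Finset (Fin n), 1 - α ≤ rel n A m s ∧ A.card = k}) ∧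
    ∀ U F, ILPFeasible n m s α U F →
      (∀ U' F', ILPFeasible n m s α U' F' → (∑ i : Fin n, U i) ≤ ∑ i : Fin n, U' i) →
      1 - α ≤ rel n (Finset.univ.filter (fun i => U i = 1)) m s ∧
        Finset.univ.filter (fun i => U i = 1) ∈ sampleSol n α m s := by
  have hrelu : 1 - α ≤ rel n Finset.univ m s := by
    have : rel n Finset.univ m s = 1 := by
      rw [rel]
      simp only [Finset.subset_univ, if_true, Finset.sum_const, Finset.card_range,
        nsmul_eq_mul, mul_one]
      field_simp
    rw [this]; linarith [hα.1]
  set S1 := {k : ℕ | ∃ U F, ILPFeasible n m s α U F ∧ (∑ i : Fin n, U i) = k} with hS1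
  set S2 := {k : ℕ | ∃ A : Finset (Fin n), 1 - α ≤ rel n A m s ∧ A.card = k} with hS2
  have hS2ne : S2.Nonempty := ⟨Finset.univ.card, Finset.univ, hrelu, rfl⟩
  have hS1ne : S1.Nonempty := by
    obtain ⟨hfeas, hsum⟩ := set_to_ilp n m hm s α Finset.univ hrelu
    exact ⟨_, _, _, hfeas, rfl⟩
  constructor
  · apply le_antisymm
    · obtain ⟨A, hA, hcard⟩ := Nat.sInf_mem hS2ne
      obtain ⟨hfeas, hsum⟩ := set_to_ilp n m hm s α A hA
      calc sInf S1 ≤ ∑ i : Fin n, (if i ∈ A then 1 else 0) := Nat.sInf_le ⟨_, _, hfeas, rfl⟩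
        _ = A.card := hsum
        _ = sInf S2 := hcard
    · obtain ⟨U, F, hfeas, hsum⟩ := Nat.sInf_mem hS1ne
      obtain ⟨hrel, hcard⟩ := ilp_to_set n m hm s α U F hfeas
      calc sInf S2 ≤ _ := Nat.sInf_le ⟨_, hrel, rfl⟩
        _ ≤ ∑ i : Fin n, U i := hcard
        _ = sInf S1 := hsum
  · intro U F hfeas hopt
    obtain ⟨hrel, hcard⟩ := ilp_to_set n m hm s α U F hfeas
    refine ⟨hrel, hrel, fun B hB => ?_⟩
    obtain ⟨hfeas', hsum'⟩ := set_to_ilp n m hm s α B hB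
    calc (Finset.univ.filter (fun i => U i = 1)).card ≤ ∑ i : Fin n, U i := hcard
      _ ≤ ∑ i : Fin n, (if i ∈ B then 1 else 0) := hopt _ _ hfeas'
      _ = B.card := hsum'
end

section
/- Let s_1, ..., s_m ⊆ {1,...,n} and α ∈ [0,1], and suppose (U_1,...,U_n) ∈ {0,1}^n and (F_1,...,F_m) ∈ {0,1}^m satisfy the ILP constraints (I) Σ_{j=1}^m F_j ≥ m·(1−α) and (II) for every i ∈ {1,...,n}, Σ_{j : i ∈ s_j} (1−F_j) ≥ #{j : i ∈ s_j}·(1−U_i). Then the set A := {i : U_i = 1} satisfies rel(A, s_{1:m}) ≥ 1−α. -/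
open MeasureTheory

/-- If `(U, F)` satisfies the ILP constraints, then the set `A = {i : U i = 1}`
satisfies `rel(A, s_{1:m}) ≥ 1 - α`. -/
theorem stmt16 (n m : ℕ) (hm : 0 < m) (s : ℕ → Finset (Fin n))
    (α : ℝ) (hα : α ∈ Set.Icc (0 : ℝ) 1)
    (U : Fin n → ℕ) (F : ℕ → ℕ) (hUF : ILPFeasible n m s α U F) :
    1 - α ≤ rel n (Finset.univ.filter (fun i => U i = 1)) m s := by
  obtain ⟨hU, hF, hI, hII⟩ := hUF
  -- Key: if F j = 1 for j ∈ range m, then s j ⊆ A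
  have key : ∀ j ∈ Finset.range m, F j = 1 →
      s j ⊆ Finset.univ.filter (fun i => U i = 1) := by
    intro j hj hFj i hi
    simp only [Finset.mem_filter, Finset.mem_univ, true_and]
    by_contra hUi
    have hUi0 : U i = 0 := by have := hU i; omega
    have h := hII i
    rw [hUi0] at h
    simp only [Nat.cast_zero, sub_zero, mul_one] at h
    -- sum of (1 - F j') ≤ card, with term at j being 0, and card ≥ 1
    have hjmem : j ∈ (Finset.range m).filter (fun j => i ∈ s j) := by
      simp [hj, hi]
    have hsum : ∑ j' ∈ (Finset.range m).filter (fun j => i ∈ s j), (1 - (F j' : ℝ)) ≤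
        (((Finset.range m).filter (fun j => i ∈ s j)).card : ℝ) - 1 := by
      have hsplit : ∑ j' ∈ (Finset.range m).filter (fun j => i ∈ s j), (1 - (F j' : ℝ)) =
          (1 - (F j : ℝ)) + ∑ j' ∈ ((Finset.range m).filter (fun j => i ∈ s j)).erase j,
            (1 - (F j' : ℝ)) := (Finset.add_sum_erase _ _ hjmem).symm
      have hbound : ∑ j' ∈ ((Finset.range m).filter (fun j => i ∈ s j)).erase j,
          (1 - (F j' : ℝ)) ≤ (((Finset.range m).filter (fun j => i ∈ s j)).erase j).card := by
        calc _ ≤ ∑ _j' ∈ ((Finset.range m).filter (fun j => i ∈ s j)).erase j, (1 : ℝ) := by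
              apply Finset.sum_le_sum
              intro x hx
              have hx' : x ∈ (Finset.range m).filter (fun j => i ∈ s j) :=
                Finset.mem_of_mem_erase hx
              have : F x ≤ 1 := hF x (Finset.mem_filter.mp hx').1
              have : (0:ℝ) ≤ (F x : ℝ) := by positivity
              linarith
          _ = _ := by simp
      have hcard : (((Finset.range m).filter (fun j => i ∈ s j)).erase j).card =
          ((Finset.range m).filter (fun j => i ∈ s j)).card - 1 :=
        Finset.card_erase_of_mem hjmem
      have hcardpos : 1 ≤ ((Finset.range m).filter (fun j => i ∈ s j)).card :=
        Finset.card_pos.mpr ⟨j, hjmem⟩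
      rw [hsplit, hFj]
      rw [hcard, Nat.cast_sub hcardpos, Nat.cast_one] at hbound
      push_cast
      linarith
    linarith
  -- Now bound the sum
  have hsumge : ∑ j ∈ Finset.range m, (F j : ℝ) ≤
      ∑ j ∈ Finset.range m, (if s j ⊆ Finset.univ.filter (fun i => U i = 1) then (1:ℝ) else 0) := by
    apply Finset.sum_le_sum
    intro j hj
    by_cases hFj : F j = 1
    · rw [if_pos (key j hj hFj), hFj]; norm_num
    · have : F j = 0 := by have := hF j hj; omega
      rw [this]
      split <;> norm_num
  unfold rel
  rw [div_eq_inv_mul, le_inv_mul_iff₀ (by exact_mod_cast hm : (0:ℝ) < m)]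
  calc (m : ℝ) * (1 - α) ≤ ∑ j ∈ Finset.range m, (F j : ℝ) := hI
    _ ≤ _ := hsumge
end
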